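/- Optimality of the iterative construction: in the point-stabilization algorithm with Ω(0) = {x^d} and Ω(k) = W_k \ (W_0 ∪ ⋯ ∪ W_{k−1}), a state x lies in Ω(k) if and only if the minimum number of steps needed to drive x to x^d (over all control sequences) equals k. Consequently, any stabilizer built by choosing, for each x ∈ Ω(k) with k ≥ 1, a control u(x) with M_F u(x) x ∈ Ω(k−1) ∪ ⋯ ∪ Ω(0) reaching the previous level, drives every state to x^d in the minimum possible time. -/
import Mathlib


open Matrix Kronecker

noncomputable section

/-- Row-major pairing `(i, j) ↦ N * i + j`, matching the standard Kronecker convention. -/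
def kronEquiv (M N : ℕ) : Fin M × Fin N ≃ Fin (M * N) := finProdFinEquiv

/-- Kronecker product of two (column) vectors. -/
def vecKron {M N : ℕ} (u : Fin M → ℝ) (x : Fin N → ℝ) : Fin (M * N) → ℝ :=
  fun k => u ((kronEquiv M N).symm k).1 * x ((kronEquiv M N).symm k).2

/-- `δ_N^i` (0-indexed): the `i`-th column of the identity matrix `I_N`. -/
def eVec (N : ℕ) (i : Fin N) : Fin N → ℝ := fun j => if j = i then 1 else 0

/-- The set `Δ_N` of columns of the identity matrix. -/
def deltaSet (N : ℕ) : Set (Fin N → ℝ) := {x | ∃ i, x = eVec N i}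

/-- A matrix is logical if every column is a standard basis vector. -/
def IsLogical {m n : ℕ} (L : Matrix (Fin m) (Fin n) ℝ) : Prop :=
  ∀ j, ∃ i, (fun k => L k j) = eVec m i

/-- The power-reducing matrix `PR_k = diag(δ_k^1, …, δ_k^k)`: column `j` is `δ_k^j ⊗ δ_k^j`. -/
def PRmat (k : ℕ) : Matrix (Fin (k * k)) (Fin k) ℝ :=
  Matrix.of fun i j => vecKron (eVec k j) (eVec k j) i

lemma stp_dim (n p : ℕ) : p * (Nat.lcm n p / p) = n * (Nat.lcm n p / n) := by
  rw [Nat.mul_div_cancel' (Nat.dvd_lcm_right n p), Nat.mul_div_cancel' (Nat.dvd_lcm_left n p)]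

/-- The semi-tensor product `A ⋉ B = (A ⊗ I_{t/n})(B ⊗ I_{t/p})`, `t = lcm(n,p)`. -/
def stp {m n p q : ℕ} (A : Matrix (Fin m) (Fin n) ℝ) (B : Matrix (Fin p) (Fin q) ℝ) :
    Matrix (Fin (m * (Nat.lcm n p / n))) (Fin (q * (Nat.lcm n p / p))) ℝ :=
  (Matrix.reindex (kronEquiv m _) (kronEquiv n _)
      (A ⊗ₖ (1 : Matrix (Fin (Nat.lcm n p / n)) (Fin (Nat.lcm n p / n)) ℝ))) *
  (Matrix.reindex ((kronEquiv p _).trans (finCongr (stp_dim n p))) (kronEquiv q _)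
      (B ⊗ₖ (1 : Matrix (Fin (Nat.lcm n p / p)) (Fin (Nat.lcm n p / p)) ℝ)))

/-- `x` can be driven to `xd` in exactly `k` steps by some free control sequence. -/
def ReachIn (m n : ℕ) (MF : Matrix (Fin (2 ^ n)) (Fin (2 ^ m * 2 ^ n)) ℝ)
    (k : ℕ) (x xd : Fin (2 ^ n) → ℝ) : Prop :=
  ∃ u : ℕ → Fin (2 ^ m) → ℝ, (∀ t, u t ∈ deltaSet (2 ^ m)) ∧
    ∃ xs : ℕ → Fin (2 ^ n) → ℝ, xs 0 = x ∧
      (∀ t, xs (t + 1) = MF.mulVec (vecKron (u t) (xs t))) ∧ xs k = xd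

lemma mulVec_eVec' {M N : ℕ} (A : Matrix (Fin M) (Fin N) ℝ) (j : Fin N) :
    A.mulVec (eVec N j) = fun i => A i j := by
  funext i
  simp [Matrix.mulVec, dotProduct, eVec, mul_ite]

lemma vecKron_eVec' {M N : ℕ} (p : Fin M) (q : Fin N) :
    vecKron (eVec M p) (eVec N q) = eVec (M * N) (kronEquiv M N (p, q)) := by
  funext k
  simp only [vecKron, eVec]
  by_cases h : k = kronEquiv M N (p, q)
  · subst h; simp
  · rw [if_neg h]
    have h2 : ((kronEquiv M N).symm k).1 ≠ p ∨ ((kronEquiv M N).symm k).2 ≠ q := by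
      by_contra hc
      push_neg at hc
      apply h
      have h3 : (kronEquiv M N).symm k = (p, q) := Prod.ext hc.1 hc.2
      have := congrArg (kronEquiv M N) h3
      simpa using this
    rcases h2 with h1 | h1 <;> simp [h1]

lemma step_mem_delta' {m n : ℕ} (MF : Matrix (Fin (2 ^ n)) (Fin (2 ^ m * 2 ^ n)) ℝ)
    (hMF : IsLogical MF) {u : Fin (2 ^ m) → ℝ} {x : Fin (2 ^ n) → ℝ}
    (hu : u ∈ deltaSet (2 ^ m)) (hx : x ∈ deltaSet (2 ^ n)) :
    MF.mulVec (vecKron u x) ∈ deltaSet (2 ^ n) := by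
  obtain ⟨p, rfl⟩ := hu; obtain ⟨q, rfl⟩ := hx
  rw [vecKron_eVec', mulVec_eVec']
  exact hMF _

lemma reachIn_prepend' {m n : ℕ} (MF : Matrix (Fin (2 ^ n)) (Fin (2 ^ m * 2 ^ n)) ℝ)
    (k : ℕ) (u0 : Fin (2 ^ m) → ℝ) (hu0 : u0 ∈ deltaSet (2 ^ m))
    (x xd : Fin (2 ^ n) → ℝ)
    (h : ReachIn m n MF k (MF.mulVec (vecKron u0 x)) xd) :
    ReachIn m n MF (k + 1) x xd := by
  obtain ⟨u, hu, xs, h0, hrec, hk⟩ := h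
  refine ⟨fun t => match t with | 0 => u0 | t + 1 => u t,
    fun t => by cases t with | zero => exact hu0 | succ t => exact hu t,
    fun t => match t with | 0 => x | t + 1 => xs t, rfl, ?_, hk⟩
  intro t
  cases t with
  | zero =>
    show xs 0 = MF.mulVec (vecKron u0 x)
    exact h0
  | succ t =>
    show xs (t + 1) = MF.mulVec (vecKron (u t) (xs t))
    exact hrec t

/-- `Ω(k)` is exactly the set of states whose minimum time to reach
`x^d` is `k`, and any stabilizer stepping each `Ω(k)` into `Ω(k-1) ∪ ⋯ ∪ Ω(0)`
drives every state to `x^d` in the minimum possible time. -/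
theorem level_sets_are_minimum_time (m n : ℕ)
    (MF : Matrix (Fin (2 ^ n)) (Fin (2 ^ m * 2 ^ n)) ℝ) (hMF : IsLogical MF)
    (xd : Fin (2 ^ n) → ℝ) (hxd : xd ∈ deltaSet (2 ^ n))
    (hcfp : ∃ u ∈ deltaSet (2 ^ m), MF.mulVec (vecKron u xd) = xd)
    (W : ℕ → Set (Fin (2 ^ n) → ℝ)) (hW0 : W 0 = {xd})
    (hWs : ∀ k, W (k + 1) = {x | x ∈ deltaSet (2 ^ n) ∧
      ∃ u ∈ deltaSet (2 ^ m),
        MF.mulVec (vecKron u x) ∈ ⋃ i ∈ Finset.range (k + 1), W i})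
    (Om : ℕ → Set (Fin (2 ^ n) → ℝ)) (hOm0 : Om 0 = W 0)
    (hOms : ∀ k, Om (k + 1) = W (k + 1) \ ⋃ i ∈ Finset.range (k + 1), W i) :
    (∀ x ∈ deltaSet (2 ^ n), ∀ k : ℕ,
      (x ∈ Om k ↔ (ReachIn m n MF k x xd ∧ ∀ j < k, ¬ ReachIn m n MF j x xd))) ∧
    (∀ g : (Fin (2 ^ n) → ℝ) → (Fin (2 ^ m) → ℝ),
      (∀ k, ∀ x ∈ Om (k + 1), g x ∈ deltaSet (2 ^ m) ∧
        MF.mulVec (vecKron (g x) x) ∈ ⋃ i ∈ Finset.range (k + 1), Om i) →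
      ∀ k, ∀ x ∈ Om k,
        (fun y => MF.mulVec (vecKron (g y) y))^[k] x = xd) := by
  obtain ⟨us, hus, hfix⟩ := hcfp
  -- W levels are subsets of Δ
  have hWdelta : ∀ k, W k ⊆ deltaSet (2 ^ n) := by
    intro k
    cases k with
    | zero => rw [hW0]; intro x hx; rw [Set.mem_singleton_iff] at hx; subst hx; exact hxd
    | succ k => rw [hWs]; intro x hx; exact hx.1
  -- monotonicity of W
  have hmono : ∀ k, W k ⊆ W (k + 1) := by
    intro k
    induction k with
    | zero =>
      rw [hW0, hWs]
      intro x hx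
      rw [Set.mem_singleton_iff] at hx; subst hx
      refine ⟨hxd, us, hus, ?_⟩
      rw [hfix]
      simp only [Set.mem_iUnion, Finset.mem_range]
      exact ⟨0, Nat.zero_lt_one, by rw [hW0]; rfl⟩
    | succ k ih =>
      rw [hWs k, hWs (k + 1)]
      rintro x ⟨hxD, u, hu, hmem⟩
      refine ⟨hxD, u, hu, ?_⟩
      simp only [Set.mem_iUnion, Finset.mem_range] at hmem ⊢
      obtain ⟨i, hi, h⟩ := hmem
      exact ⟨i, Nat.lt_succ_of_lt hi, h⟩
  have hmono' : ∀ a b, a ≤ b → W a ⊆ W b := by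
    intro a b hab
    induction b, hab using Nat.le_induction with
    | base => exact Set.Subset.rfl
    | succ b _ ih => exact ih.trans (hmono b)
  -- the cumulative union equals the top level
  have hUnion : ∀ k, (⋃ i ∈ Finset.range (k + 1), W i) = W k := by
    intro k
    apply Set.Subset.antisymm
    · intro x hx
      simp only [Set.mem_iUnion, Finset.mem_range] at hx
      obtain ⟨i, hi, hx⟩ := hx
      exact hmono' i k (Nat.lt_succ_iff.mp hi) hx
    · intro x hx
      simp only [Set.mem_iUnion, Finset.mem_range]
      exact ⟨k, Nat.lt_succ_self k, hx⟩
  -- key equivalence between W membership and exact-time reachability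
  have key : ∀ k, ∀ x ∈ deltaSet (2 ^ n), (x ∈ W k ↔ ReachIn m n MF k x xd) := by
    intro k
    induction k with
    | zero =>
      intro x hx
      rw [hW0, Set.mem_singleton_iff]
      constructor
      · intro h
        rw [h]
        exact ⟨fun _ => us, fun _ => hus, fun _ => xd, rfl, fun t => hfix.symm, rfl⟩
      · rintro ⟨u, hu, xs, h0, hrec, hk⟩
        rw [← h0, hk]
    | succ k ih =>
      intro x hx
      simp only [hWs k, hUnion k, Set.mem_setOf_eq]
      constructor
      · rintro ⟨hxD, u, hu, hmem⟩
        have hy : MF.mulVec (vecKron u x) ∈ deltaSet (2 ^ n) :=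
          step_mem_delta' MF hMF hu hx
        exact reachIn_prepend' MF k u hu x xd ((ih _ hy).mp hmem)
      · rintro ⟨u, hu, xs, h0, hrec, hk⟩
        refine ⟨hx, u 0, hu 0, ?_⟩
        have h1 : MF.mulVec (vecKron (u 0) x) = xs 1 := by rw [hrec 0, h0]
        rw [h1]
        refine (ih _ ?_).mpr
          ⟨fun t => u (t + 1), fun t => hu (t + 1), fun t => xs (t + 1), rfl,
            fun t => hrec (t + 1), hk⟩
        rw [← h1]
        exact step_mem_delta' MF hMF (hu 0) hx
  -- Om characterization in terms of W
  have hOmW : ∀ k x, x ∈ Om k ↔ (x ∈ W k ∧ ∀ j < k, x ∉ W j) := by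
    intro k x
    cases k with
    | zero =>
      rw [hOm0]
      exact ⟨fun h => ⟨h, fun j hj => absurd hj (Nat.not_lt_zero j)⟩, fun h => h.1⟩
    | succ k =>
      rw [hOms k, Set.mem_diff, hUnion k]
      constructor
      · rintro ⟨h1, h2⟩
        exact ⟨h1, fun j hj hWj => h2 (hmono' j k (Nat.lt_succ_iff.mp hj) hWj)⟩
      · rintro ⟨h1, h2⟩
        exact ⟨h1, h2 k (Nat.lt_succ_self k)⟩
  constructor
  · intro x hx k
    rw [hOmW k x]
    constructor
    · rintro ⟨h1, h2⟩
      exact ⟨(key k x hx).mp h1, fun j hj hr => h2 j hj ((key j x hx).mpr hr)⟩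
    · rintro ⟨h1, h2⟩
      exact ⟨(key k x hx).mpr h1, fun j hj hw => h2 j hj ((key j x hx).mp hw)⟩
  · intro g hg k
    induction k with
    | zero =>
      intro x hx
      rw [hOm0, hW0, Set.mem_singleton_iff] at hx
      simpa using hx
    | succ k ih =>
      intro x hx
      obtain ⟨hgD, hstep⟩ := hg k x hx
      simp only [Set.mem_iUnion, Finset.mem_range] at hstep
      obtain ⟨i, hik, hfx⟩ := hstep
      have hxWk1 : x ∈ W (k + 1) := ((hOmW (k + 1) x).mp hx).1
      have hxnW : ∀ j < k + 1, x ∉ W j := ((hOmW (k + 1) x).mp hx).2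
      have hxD : x ∈ deltaSet (2 ^ n) := hWdelta (k + 1) hxWk1
      have hfxW : MF.mulVec (vecKron (g x) x) ∈ W i := ((hOmW i _).mp hfx).1
      have hieq : i = k := by
        rcases Nat.lt_or_ge i k with hlt | hge
        · exfalso
          obtain ⟨j, rfl⟩ : ∃ j, k = j + 1 :=
            ⟨k - 1, (Nat.succ_pred_eq_of_pos (Nat.pos_of_ne_zero (by omega))).symm⟩
          apply hxnW (j + 1) (Nat.lt_succ_self _)
          rw [hWs j]
          refine ⟨hxD, g x, hgD, ?_⟩
          rw [hUnion j]
          exact hmono' i j (Nat.lt_succ_iff.mp hlt) hfxW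
        · omega
      subst hieq
      rw [Function.iterate_succ_apply]
      exact ih _ hfx
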